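/- arXiv:2410.03517 — 2 statements merged into one kernel-verified Lean document; each statement's English description precedes it below -/
import Mathlib

section
/- Let F be a finite simple graph, k ≥ 1, u = (u₁, …, u_k) a k-tuple of vertices of F, A = {u₁, …, u_k}, and let C₁, …, C_K be the CCEs of F induced by A. Assume that every vertex of F outside A is incident to at least one edge. Let G be a simple graph and v = (v₁, …, v_k) a k-tuple of vertices of G satisfying the compatibility condition: for all i, j ∈ [k], u_i = u_j implies v_i = v_j. Then the map sending each graph homomorphism h : F → G with h(u_j) = v_j for all j ∈ [k] to the K-tuple of its restrictions to the edge-induced subgraphs of C₁, …, C_K is a bijection onto the product over i ∈ [K] of the sets of graph homomorphisms from the edge-induced subgraph of C_i to G that send every anchored vertex u_j of C_i to v_j. -/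
/-- One step of the CCE relation: two edges of `F` share an endpoint outside `A`. -/
def cceStep {V : Type*} (F : SimpleGraph V) (A : Set V)
    (e e' : F.edgeSet) : Prop :=
  ∃ x : V, x ∉ A ∧ x ∈ (e : Sym2 V) ∧ x ∈ (e' : Sym2 V)

/-- The CCE equivalence relation on the edge set of `F` induced by the vertex set `A`. -/
def cceSetoid {V : Type*} (F : SimpleGraph V) (A : Set V) : Setoid F.edgeSet :=
  Relation.EqvGen.setoid (cceStep F A)

/-- The CCEs (connected components of edges) of `F` induced by `A`. -/
def cceClasses {V : Type*} (F : SimpleGraph V) (A : Set V) : Set (Set F.edgeSet) :=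
  Setoid.classes (cceSetoid F A)

/-- The vertex set of the edge-induced subgraph of a set `C` of edges of `F`:
all endpoints of edges in `C`. -/
def cceVerts {V : Type*} (F : SimpleGraph V) (C : Set F.edgeSet) : Set V :=
  {x : V | ∃ e ∈ C, x ∈ (e : Sym2 V)}

/-- The edge-induced subgraph of a set `C` of edges of `F`, as a simple graph whose
vertex type is the set of endpoints of edges in `C`. -/
def cceGraph {V : Type*} (F : SimpleGraph V) (C : Set F.edgeSet) :
    SimpleGraph (cceVerts F C) where
  Adj x y := s((x : V), (y : V)) ∈ Subtype.val '' C
  symm := by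
    constructor
    intro x y h
    rwa [Sym2.eq_swap] at h
  loopless := by
    constructor
    intro x h
    obtain ⟨e, _, he⟩ := h
    exact F.not_isDiag_of_mem_edgeSet e.2 (by rw [he]; exact Sym2.mk_isDiag_iff.2 rfl)

/-- Restriction of a graph homomorphism `h : F →g G` to the edge-induced subgraph
of a set `C` of edges of `F`. -/
def restrictHom {V W : Type*} {F : SimpleGraph V} {G : SimpleGraph W}
    (h : F →g G) (C : Set F.edgeSet) : cceGraph F C →g G where
  toFun x := h x.1
  map_rel' := by
    intro a b hab
    obtain ⟨e, _, he⟩ := hab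
    have hadj : F.Adj a.1 b.1 := F.mem_edgeSet.1 (by rw [← he]; exact e.2)
    exact h.map_rel hadj

/-- If two edges, lying in CCE classes `C` and `C'` respectively, share an endpoint
outside `A`, then the classes coincide. -/
lemma cce_class_eq_of_shared {V : Type*} {F : SimpleGraph V} {A : Set V}
    {C C' : Set F.edgeSet} (hC : C ∈ cceClasses F A) (hC' : C' ∈ cceClasses F A)
    {e e' : F.edgeSet} (he : e ∈ C) (he' : e' ∈ C')
    {x : V} (hx : x ∉ A) (hxe : x ∈ (e : Sym2 V)) (hxe' : x ∈ (e' : Sym2 V)) : C = C' := by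
  have hr : (cceSetoid F A).r e' e := Relation.EqvGen.rel _ _ ⟨x, hx, hxe', hxe⟩
  obtain ⟨a, rfl⟩ := hC
  have he'a : e' ∈ {y | (cceSetoid F A).r y a} := (cceSetoid F A).trans' hr he
  exact (Setoid.eq_of_mem_classes hC' he' (Setoid.mem_classes _ a) he'a).symm

theorem stmt1 {V W : Type*} [Fintype V] (F : SimpleGraph V) (k K : ℕ) (hk : 1 ≤ k)
    (u : Fin k → V) (C : Fin K → Set F.edgeSet)
    (hC : ∀ i, C i ∈ cceClasses F (Set.range u))
    (hCinj : Function.Injective C)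
    (hCcover : ∀ e : F.edgeSet, ∃ i, e ∈ C i)
    (hIncident : ∀ x : V, x ∉ Set.range u → ∃ e : F.edgeSet, x ∈ (e : Sym2 V))
    (G : SimpleGraph W) (v : Fin k → W)
    (hcompat : ∀ i j, u i = u j → v i = v j) :
    Function.Bijective
      (fun h : {h : F →g G // ∀ j, h.1 (u j) = v j} =>
        (fun i =>
          (⟨restrictHom h.1 (C i),
            fun j hj => h.2 j⟩ :
            {g : cceGraph F (C i) →g G //
              ∀ (j : Fin k) (hj : u j ∈ cceVerts F (C i)), g.1 ⟨u j, hj⟩ = v j}) :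
          (i : Fin K) → {g : cceGraph F (C i) →g G //
            ∀ (j : Fin k) (hj : u j ∈ cceVerts F (C i)), g.1 ⟨u j, hj⟩ = v j})) := by
  classical
  constructor
  · -- injectivity
    intro h1 h2 heq
    apply Subtype.ext
    apply DFunLike.ext
    intro x
    by_cases hx : x ∈ Set.range u
    · obtain ⟨j, rfl⟩ := hx
      exact (h1.2 j).trans (h2.2 j).symm
    · obtain ⟨e, he⟩ := hIncident x hx
      obtain ⟨i, hi⟩ := hCcover e
      have hxv : x ∈ cceVerts F (C i) := ⟨e, hi, he⟩
      have h' := congrArg Subtype.val (congrFun heq i)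
      exact DFunLike.congr_fun h' (⟨x, hxv⟩ : cceVerts F (C i))
  · -- surjectivity
    intro g
    -- For `x ∉ A`, pick an edge through `x` and a class containing it.
    have pick : ∀ x : V, x ∉ Set.range u → ∃ i : Fin K, x ∈ cceVerts F (C i) := by
      intro x hx
      obtain ⟨e, he⟩ := hIncident x hx
      obtain ⟨i, hi⟩ := hCcover e
      exact ⟨i, e, hi, he⟩
    -- The underlying function of the glued homomorphism.
    set h0 : V → W := fun x =>
      if hx : x ∈ Set.range u then v hx.choose
      else (g (pick x hx).choose).1 ⟨x, (pick x hx).choose_spec⟩ with hh0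
    -- Key consistency: on any class's vertex set, `h0` agrees with the given piece.
    have hval : ∀ (x : V) (i : Fin K) (hxv : x ∈ cceVerts F (C i)),
        h0 x = (g i).1 ⟨x, hxv⟩ := by
      intro x i hxv
      by_cases hx : x ∈ Set.range u
      · have hux : u hx.choose = x := hx.choose_spec
        have hmem : u hx.choose ∈ cceVerts F (C i) := by rw [hux]; exact hxv
        have := (g i).2 hx.choose hmem
        rw [hh0]
        simp only [dif_pos hx]
        rw [← this]
        congr 1
        exact Subtype.ext hux
      · -- the class is unique for vertices outside A
        have hxv' := (pick x hx).choose_spec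
        obtain ⟨e, he, hxe⟩ := hxv
        obtain ⟨e', he', hxe'⟩ := hxv'
        have hCeq : C (pick x hx).choose = C i :=
          cce_class_eq_of_shared (hC _) (hC i) he' he hx hxe' hxe
        have hieq : (pick x hx).choose = i := hCinj hCeq
        rw [hh0]
        simp only [dif_neg hx]
        subst hieq
        rfl
    -- `h0` is a graph homomorphism.
    have hmap : ∀ {a b : V}, F.Adj a b → G.Adj (h0 a) (h0 b) := by
      intro a b hab
      set e : F.edgeSet := ⟨s(a, b), hab⟩ with hedef
      obtain ⟨i, hi⟩ := hCcover e
      have hav : a ∈ cceVerts F (C i) := ⟨e, hi, by simp [hedef]⟩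
      have hbv : b ∈ cceVerts F (C i) := ⟨e, hi, by simp [hedef]⟩
      have hadj : (cceGraph F (C i)).Adj ⟨a, hav⟩ ⟨b, hbv⟩ := ⟨e, hi, rfl⟩
      have := (g i).1.map_rel hadj
      rwa [← hval a i hav, ← hval b i hbv] at this
    refine ⟨⟨⟨h0, fun hab => hmap hab⟩, ?_⟩, ?_⟩
    · -- anchored values
      intro j
      have hx : u j ∈ Set.range u := ⟨j, rfl⟩
      show h0 (u j) = v j
      rw [hh0]
      simp only [dif_pos hx]
      exact hcompat hx.choose j hx.choose_spec
    · -- the restrictions recover `g`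
      funext i
      apply Subtype.ext
      apply DFunLike.ext
      rintro ⟨x, hxv⟩
      exact hval x i hxv
end

section
/- Let F be a finite simple graph, k ≥ 1, u = (u₁, …, u_k) a k-tuple of vertices of F, A = {u₁, …, u_k}, and let C₁, …, C_K be the CCEs of F induced by A. Assume that every vertex of F outside A is incident to at least one edge. Let G be a finite simple graph and v = (v₁, …, v_k) a k-tuple of vertices of G satisfying: for all i, j ∈ [k], u_i = u_j implies v_i = v_j. Then the number of graph homomorphisms h : F → G with h(u_j) = v_j for all j ∈ [k] equals the product over i ∈ [K] of the number of graph homomorphisms from the edge-induced subgraph of C_i to G that send every anchored vertex u_j of C_i to v_j. -/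
theorem stmt2 {V W : Type*} [Fintype V] [Fintype W] (F : SimpleGraph V) (k K : ℕ)
    (hk : 1 ≤ k) (u : Fin k → V) (C : Fin K → Set F.edgeSet)
    (hC : ∀ i, C i ∈ cceClasses F (Set.range u))
    (hCinj : Function.Injective C)
    (hCcover : ∀ e : F.edgeSet, ∃ i, e ∈ C i)
    (hIncident : ∀ x : V, x ∉ Set.range u → ∃ e : F.edgeSet, x ∈ (e : Sym2 V))
    (G : SimpleGraph W) (v : Fin k → W)
    (hcompat : ∀ i j, u i = u j → v i = v j) :
    Nat.card {h : F →g G // ∀ j, h.1 (u j) = v j} =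
      ∏ i : Fin K,
        Nat.card {g : cceGraph F (C i) →g G //
          ∀ (j : Fin k) (hj : u j ∈ cceVerts F (C i)), g.1 ⟨u j, hj⟩ = v j} := by

  classical
  -- uniqueness of the class containing a vertex outside A
  have uniq : ∀ (x : V) (e e' : F.edgeSet) (i j : Fin K), x ∉ Set.range u →
      e ∈ C i → e' ∈ C j → x ∈ (e : Sym2 V) → x ∈ (e' : Sym2 V) → i = j := by
    intro x e e' i j hx hei hej hxe hxe'
    have hstep : cceStep F (Set.range u) e' e := ⟨x, hx, hxe', hxe⟩
    have hrel : (cceSetoid F (Set.range u)).r e' e := Relation.EqvGen.rel _ _ hstep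
    obtain ⟨a, ha⟩ := hC i
    have hea : (cceSetoid F (Set.range u)).r e a := by
      have := hei; rw [ha] at this; exact this
    have he'i : e' ∈ C i := by
      rw [ha]; exact (cceSetoid F (Set.range u)).trans hrel hea
    exact hCinj (Setoid.eq_of_mem_classes (hC i) he'i (hC j) hej)
  have hmem : ∀ x : V, x ∉ Set.range u → ∃ i, x ∈ cceVerts F (C i) := by
    intro x hx
    obtain ⟨e, hxe⟩ := hIncident x hx
    obtain ⟨i, hei⟩ := hCcover e
    exact ⟨i, e, hei, hxe⟩
  let Φ : {h : F →g G // ∀ j, h.1 (u j) = v j} →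
      ∀ i : Fin K, {g : cceGraph F (C i) →g G //
        ∀ (j : Fin k) (hj : u j ∈ cceVerts F (C i)), g.1 ⟨u j, hj⟩ = v j} :=
    fun h i => ⟨restrictHom h.1 (C i), fun j _ => h.2 j⟩
  have hinj : Function.Injective Φ := by
    intro h h' hhh
    apply Subtype.ext
    ext x
    by_cases hx : x ∈ Set.range u
    · obtain ⟨j, rfl⟩ := hx
      exact (h.2 j).trans (h'.2 j).symm
    · obtain ⟨i, hxi⟩ := hmem x hx
      have h2 : (Φ h i).1 = (Φ h' i).1 := congrArg Subtype.val (congrFun hhh i)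
      exact DFunLike.congr_fun h2 ⟨x, hxi⟩
  have hsurj : Function.Surjective Φ := by
    intro g
    let f : V → W := fun x =>
      if hx : x ∈ Set.range u then v hx.choose
      else (g (hmem x hx).choose).1 ⟨x, (hmem x hx).choose_spec⟩
    have gcongr : ∀ (x : V) (i i' : Fin K) (h : i = i') (hx1 : x ∈ cceVerts F (C i))
        (hx2 : x ∈ cceVerts F (C i')), (g i).1 ⟨x, hx1⟩ = (g i').1 ⟨x, hx2⟩ := by
      rintro x i i' rfl hx1 hx2; rfl
    have key : ∀ (i : Fin K) (x : V) (hx : x ∈ cceVerts F (C i)),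
        f x = (g i).1 ⟨x, hx⟩ := by
      intro i x hx
      by_cases hxA : x ∈ Set.range u
      · simp only [f, dif_pos hxA]
        have h2 := (g i).2 hxA.choose (hxA.choose_spec.symm ▸ hx)
        rw [← h2]
        exact congrArg _ (Subtype.ext hxA.choose_spec)
      · simp only [f, dif_neg hxA]
        obtain ⟨e, hei, hxe⟩ := hx
        obtain ⟨e', he'i0, hxe'⟩ := (hmem x hxA).choose_spec
        exact gcongr x _ i (uniq x e' e _ _ hxA he'i0 hei hxe' hxe) _ _
    have hmap : ∀ {a b : V}, F.Adj a b → G.Adj (f a) (f b) := by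
      intro a b hab
      have he : s(a, b) ∈ F.edgeSet := hab
      obtain ⟨i, hei⟩ := hCcover ⟨s(a, b), he⟩
      have ha : a ∈ cceVerts F (C i) := ⟨⟨s(a, b), he⟩, hei, Sym2.mem_mk_left a b⟩
      have hb : b ∈ cceVerts F (C i) := ⟨⟨s(a, b), he⟩, hei, Sym2.mem_mk_right a b⟩
      rw [key i a ha, key i b hb]
      exact (g i).1.map_rel ⟨⟨s(a, b), he⟩, hei, rfl⟩
    have hP : ∀ j, f (u j) = v j := by
      intro j
      have hjA : u j ∈ Set.range u := ⟨j, rfl⟩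
      simp only [f, dif_pos hjA]
      exact hcompat _ j hjA.choose_spec
    refine ⟨⟨⟨f, hmap⟩, hP⟩, ?_⟩
    funext i
    apply Subtype.ext
    ext x
    exact key i x.1 x.2
  rw [Nat.card_congr (Equiv.ofBijective Φ ⟨hinj, hsurj⟩), Nat.card_pi]
end
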